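/- Let A be an s-row reduced nonsingular n×n matrix over K[x] with s-row degrees η = (η_1,...,η_n). Then adj(A)^T is (-s)-row reduced, and the (-s)-row degree of the i-th row of adj(A)^T is η - s - η_i, where η = Σ_j η_j and s = Σ_j s_j. -/

import Mathlib

open Polynomial Matrix

noncomputable section

/-- Degree of a polynomial as an element of `WithBot ℤ`. -/
def zdeg {K : Type*} [Field K] (p : K[X]) : WithBot ℤ :=
  p.degree.map fun a : ℕ => (a : ℤ)

/-- The `s`-degree of a row vector `w`: `max_j (deg w_j + s_j)`. -/
def sdeg {K : Type*} [Field K] {m : ℕ} (s : Fin m → ℤ) (w : Fin m → K[X]) : WithBot ℤ :=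
  Finset.univ.sup fun j => zdeg (w j) + (s j : WithBot ℤ)

/-- The `s`-leading matrix of `A`, given its `s`-row degrees `ds`: entry `(i,j)` is the
coefficient of `A i j` at `ds i - s j` (or `0` when that index is negative). -/
def sLeadingMatrix {K : Type*} [Field K] {n m : ℕ} (s : Fin m → ℤ)
    (A : Matrix (Fin n) (Fin m) K[X]) (ds : Fin n → ℤ) : Matrix (Fin n) (Fin m) K :=
  Matrix.of fun i j => if ds i - s j < 0 then (0 : K) else (A i j).coeff (ds i - s j).toNat

private lemma coeff_prod_of_natDegree_le' {R : Type*} [CommSemiring R] {ι : Type*}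
    [DecidableEq ι] (t : Finset ι) (f : ι → R[X]) (d : ι → ℕ)
    (h : ∀ i ∈ t, (f i).natDegree ≤ d i) :
    (∏ i ∈ t, f i).coeff (∑ i ∈ t, d i) = ∏ i ∈ t, (f i).coeff (d i) := by
  induction t using Finset.induction_on with
  | empty => simp
  | @insert a t' hx ih =>
    rw [Finset.prod_insert hx, Finset.sum_insert hx, Finset.prod_insert hx,
      Polynomial.coeff_mul_add_eq_of_natDegree_le (h a (Finset.mem_insert_self a t'))
        (le_trans (Polynomial.natDegree_prod_le _ _)
          (Finset.sum_le_sum fun i hi => h i (Finset.mem_insert_of_mem hi))),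
      ih (fun i hi => h i (Finset.mem_insert_of_mem hi))]

private lemma det_natDegree_le' {K : Type*} [Field K] {n : ℕ}
    (P : Matrix (Fin n) (Fin n) K[X]) (d : Fin n → ℕ)
    (h : ∀ k l, (P k l).natDegree ≤ d k) : P.det.natDegree ≤ ∑ k, d k := by
  rw [Matrix.det_apply']
  refine Polynomial.natDegree_sum_le_of_forall_le _ _ fun σ _ => ?_
  refine le_trans (Polynomial.natDegree_mul_le) ?_
  rw [Polynomial.natDegree_intCast, zero_add]
  refine le_trans (Polynomial.natDegree_prod_le _ _) ?_
  calc ∑ k, (P (σ k) k).natDegree ≤ ∑ k, d (σ k) :=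
        Finset.sum_le_sum fun k _ => h (σ k) k
    _ = ∑ k, d k := Equiv.sum_comp σ d

private lemma det_coeff' {K : Type*} [Field K] {n : ℕ}
    (P : Matrix (Fin n) (Fin n) K[X]) (d : Fin n → ℕ)
    (h : ∀ k l, (P k l).natDegree ≤ d k) :
    P.det.coeff (∑ k, d k) = (Matrix.of fun k l => (P k l).coeff (d k)).det := by
  rw [Matrix.det_apply', Matrix.det_apply', Polynomial.finset_sum_coeff]
  refine Finset.sum_congr rfl fun σ _ => ?_
  have hs : (∑ k, d k) = ∑ k, d (σ k) := (Equiv.sum_comp σ d).symm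
  rw [← Polynomial.C_eq_intCast, Polynomial.coeff_C_mul, hs,
    coeff_prod_of_natDegree_le' Finset.univ _ _ (fun k _ => h (σ k) k)]
  rfl

private lemma zdeg_eq_natDegree {K : Type*} [Field K] {p : K[X]} (hp : p ≠ 0) :
    zdeg p = ((p.natDegree : ℤ) : WithBot ℤ) := by
  rw [zdeg, Polynomial.degree_eq_natDegree hp]
  rfl

private lemma zdeg_zero {K : Type*} [Field K] : zdeg (0 : K[X]) = ⊥ := by
  simp [zdeg]

/-- If `A` is an `s`-row reduced nonsingular matrix with `s`-row degrees `η`, then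
`adj(A)ᵀ` is `(-s)`-row reduced, and its `i`-th `(-s)`-row degree is `η - s - η_i`
where `η = Σ η_j` and `s = Σ s_j`. -/
theorem stmt15 {K : Type*} [Field K] {n : ℕ} (s : Fin n → ℤ)
    (A : Matrix (Fin n) (Fin n) K[X]) (hA : A.det ≠ 0)
    (η : Fin n → ℤ) (hη : ∀ i, (η i : WithBot ℤ) = sdeg s (A i))
    (hred : (sLeadingMatrix s A η).det ≠ 0) :
    (∀ i, (((∑ j, η j) - (∑ j, s j) - η i : ℤ) : WithBot ℤ) =
        sdeg (fun j => -s j) ((A.adjugate)ᵀ i)) ∧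
    (sLeadingMatrix (fun j => -s j) (A.adjugate)ᵀ
        (fun i => (∑ j, η j) - (∑ j, s j) - η i)).det ≠ 0 := by
  classical
  set L := sLeadingMatrix s A η with hL
  set d : Fin n → ℤ := fun i => (∑ j, η j) - (∑ j, s j) - η i with hd
  -- entrywise degree bounds
  have hdegA : ∀ k l, A k l ≠ 0 → ((A k l).natDegree : ℤ) + s l ≤ η k := by
    intro k l h0
    have h1 : zdeg (A k l) + (s l : WithBot ℤ) ≤ (η k : WithBot ℤ) := by
      rw [hη k]
      exact Finset.le_sup (f := fun j => zdeg (A k j) + (s j : WithBot ℤ)) (Finset.mem_univ l)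
    rw [zdeg_eq_natDegree h0, ← WithBot.coe_add] at h1
    exact_mod_cast h1
  -- a large shift making all exponents nonnegative
  set Ns : ℕ := Finset.univ.sup fun l => (s l).natAbs with hNs
  set Nh : ℕ := Finset.univ.sup fun k => (η k).natAbs with hNh
  set N : ℤ := (Ns : ℤ) + (Nh : ℤ) with hN
  have hNs' : ∀ l, 0 ≤ N + s l := by
    intro l
    have h1 : (s l).natAbs ≤ Ns := Finset.le_sup (f := fun l => (s l).natAbs) (Finset.mem_univ l)
    omega
  have hNh' : ∀ k, 0 ≤ N + η k := by
    intro k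
    have h1 : (η k).natAbs ≤ Nh := Finset.le_sup (f := fun k => (η k).natAbs) (Finset.mem_univ k)
    omega
  -- the key per-entry computation
  have key : ∀ i j : Fin n,
      (A.adjugate)ᵀ i j = (A.updateRow i (Pi.single j 1)).det ∧
      zdeg (A.updateRow i (Pi.single j 1)).det ≤ ((d i + s j : ℤ) : WithBot ℤ) ∧
      (if d i + s j < 0 then (0 : K)
        else ((A.updateRow i (Pi.single j 1)).det).coeff (d i + s j).toNat)
        = (L.updateRow i (Pi.single j 1)).det := by
    intro i j
    set U := A.updateRow i (Pi.single j (1 : K[X])) with hU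
    set m : Fin n → ℕ := fun l => (N + s l).toNat with hm
    set dd : Fin n → ℕ := fun k => if k = i then (N + s j).toNat else (N + η k).toNat with hdd
    set Cm : Matrix (Fin n) (Fin n) K[X] := Matrix.of fun k l => U k l * X ^ m l with hC
    have hmz : ∀ l, (m l : ℤ) = N + s l := fun l => Int.toNat_of_nonneg (hNs' l)
    have hddz : ∀ k, k ≠ i → (dd k : ℤ) = N + η k := by
      intro k hk
      simp only [hdd, if_neg hk]
      exact Int.toNat_of_nonneg (hNh' k)
    have hddi : (dd i : ℤ) = N + s j := by
      simp only [hdd, if_pos rfl]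
      exact Int.toNat_of_nonneg (hNs' j)
    -- entry degree bounds
    have hent : ∀ k l, (Cm k l).natDegree ≤ dd k := by
      intro k l
      by_cases hk : k = i
      · subst hk
        simp only [hC, Matrix.of_apply, hU, Matrix.updateRow_self]
        by_cases hl : l = j
        · have h1 := hmz l
          have h2 := hddi
          subst hl
          simp only [Pi.single_eq_same, one_mul, Polynomial.natDegree_X_pow]
          omega
        · simp [Pi.single_eq_of_ne hl]
      · simp only [hC, Matrix.of_apply, hU, Matrix.updateRow_ne hk]
        by_cases h0 : A k l = 0
        · simp [h0]
        · have h1 := hdegA k l h0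
          have h2 : (A k l * X ^ m l).natDegree ≤ (A k l).natDegree + m l :=
            le_trans (Polynomial.natDegree_mul_le) (by simp)
          have h3 := hddz k hk
          have h4 := hmz l
          omega
    -- determinant of the scaled matrix
    have hdet : Cm.det = U.det * X ^ (∑ l, m l) := by
      calc Cm.det = (∏ l, (X : K[X]) ^ m l) * U.det := by
            rw [← Matrix.det_mul_row]
            congr 1
            ext k l
            simp [hC, mul_comm]
        _ = U.det * X ^ (∑ l, m l) := by
            rw [Finset.prod_pow_eq_pow_sum]
            ring
    -- sum bookkeeping
    have hsum : ((∑ k, dd k : ℕ) : ℤ) = ((∑ l, m l : ℕ) : ℤ) + (d i + s j) := by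
      have e1 : ∀ k, (dd k : ℤ) = (N + η k) + (if k = i then s j - η i else 0) := by
        intro k
        by_cases hk : k = i
        · subst hk; rw [hddi, if_pos rfl]; ring
        · rw [hddz k hk, if_neg hk]; ring
      have e2 : ((∑ k, dd k : ℕ) : ℤ) = ∑ k, ((N + η k) + (if k = i then s j - η i else 0)) := by
        push_cast
        exact Finset.sum_congr rfl fun k _ => e1 k
      have e3 : ((∑ l, m l : ℕ) : ℤ) = ∑ l, (N + s l) := by
        push_cast
        exact Finset.sum_congr rfl fun l _ => hmz l
      rw [e2, e3, Finset.sum_add_distrib, Finset.sum_ite_eq' Finset.univ i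
        (fun _ => s j - η i), if_pos (Finset.mem_univ i)]
      simp only [Finset.sum_add_distrib, Finset.sum_const, Finset.card_univ,
        Fintype.card_fin, nsmul_eq_mul, hd]
      ring
    -- the leading coefficient matrix of Cm
    have hQ : (Matrix.of fun k l => (Cm k l).coeff (dd k)) = L.updateRow i (Pi.single j 1) := by
      ext k l
      simp only [Matrix.of_apply, hC]
      rw [Polynomial.coeff_mul_X_pow']
      by_cases hk : k = i
      · rw [hk, Matrix.updateRow_self]
        by_cases hl : l = j
        · rw [hl]
          have h1 := hmz j
          have h2 := hddi
          rw [if_pos (by omega : m j ≤ dd i)]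
          have h4 : dd i - m j = 0 := by omega
          rw [h4]
          simp [hU, Matrix.updateRow_self, Pi.single_eq_same]
        · simp [hU, Matrix.updateRow_self, Pi.single_eq_of_ne hl]
      · rw [Matrix.updateRow_ne hk]
        have hUA : U k l = A k l := by simp [hU, Matrix.updateRow_ne hk]
        rw [hUA, hL]
        simp only [sLeadingMatrix, Matrix.of_apply]
        have h3 := hddz k hk
        have h4 := hmz l
        by_cases hη0 : η k - s l < 0
        · rw [if_pos hη0, if_neg (by omega)]
        · rw [if_neg hη0, if_pos (by omega)]
          congr 1
          omega
    have hcoef : Cm.det.coeff (∑ k, dd k) = (L.updateRow i (Pi.single j 1)).det := by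
      rw [det_coeff' Cm dd hent, hQ]
    -- degree bound for U.det
    have hdegC : Cm.det.natDegree ≤ ∑ k, dd k := det_natDegree_le' Cm dd hent
    have hzd : zdeg U.det ≤ ((d i + s j : ℤ) : WithBot ℤ) := by
      by_cases h0 : U.det = 0
      · rw [h0, zdeg_zero]
        exact bot_le
      · rw [zdeg_eq_natDegree h0, WithBot.coe_le_coe]
        have hx : (U.det * X ^ (∑ l, m l)).natDegree = U.det.natDegree + ∑ l, m l := by
          rw [Polynomial.natDegree_mul h0 (pow_ne_zero _ Polynomial.X_ne_zero),
            Polynomial.natDegree_X_pow]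
        have h5 : U.det.natDegree + ∑ l, m l ≤ ∑ k, dd k := by
          rw [← hx, ← hdet]; exact hdegC
        omega
    have hccoef : (if d i + s j < 0 then (0 : K) else U.det.coeff (d i + s j).toNat)
        = (L.updateRow i (Pi.single j 1)).det := by
      rw [← hcoef, hdet, Polynomial.coeff_mul_X_pow']
      by_cases hneg : d i + s j < 0
      · rw [if_pos hneg, if_neg (by omega)]
      · rw [if_neg hneg, if_pos (by omega)]
        congr 1
        omega
    exact ⟨by rw [Matrix.transpose_apply, Matrix.adjugate_apply], hzd, hccoef⟩
  -- the leading matrix of the transposed adjugate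
  have hLM : sLeadingMatrix (fun j => -s j) (A.adjugate)ᵀ d = (L.adjugate)ᵀ := by
    ext i j
    have h1 := (key i j).2.2
    have he := (key i j).1
    simp only [sLeadingMatrix, Matrix.of_apply, sub_neg_eq_add]
    rw [he, Matrix.transpose_apply, Matrix.adjugate_apply]
    exact h1
  have hdetadj : ((L.adjugate)ᵀ).det ≠ 0 := by
    rw [Matrix.det_transpose, Matrix.det_adjugate]
    exact pow_ne_zero _ hred
  have hdet2 : (sLeadingMatrix (fun j => -s j) (A.adjugate)ᵀ d).det ≠ 0 := by
    rw [hLM]; exact hdetadj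
  refine ⟨fun i => ?_, hdet2⟩
  -- there is a nonzero entry in row i of (adj L)ᵀ
  have hrow : ∃ j, (L.adjugate)ᵀ i j ≠ 0 := by
    by_contra h
    push_neg at h
    exact hdetadj (Matrix.det_eq_zero_of_row_eq_zero i h)
  obtain ⟨j, hj⟩ := hrow
  apply le_antisymm
  · -- d i ≤ sdeg
    have h1 := (key i j).2.2
    have hadj : (L.adjugate)ᵀ i j = (L.updateRow i (Pi.single j 1)).det := by
      rw [Matrix.transpose_apply, Matrix.adjugate_apply]
    rw [hadj, ← h1] at hj
    by_cases hneg : d i + s j < 0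
    · rw [if_pos hneg] at hj
      exact absurd rfl hj
    · rw [if_neg hneg] at hj
      have hp0 : (A.updateRow i (Pi.single j 1)).det ≠ 0 := fun h => hj (by simp [h])
      have h4 : (d i + s j).toNat ≤ (A.updateRow i (Pi.single j 1)).det.natDegree :=
        Polynomial.le_natDegree_of_ne_zero hj
      have hle : ((d i + s j : ℤ) : WithBot ℤ) ≤ zdeg (A.updateRow i (Pi.single j 1)).det := by
        rw [zdeg_eq_natDegree hp0, WithBot.coe_le_coe]
        omega
      have hstep : ((d i : ℤ) : WithBot ℤ) ≤
          zdeg ((A.adjugate)ᵀ i j) + ((-s j : ℤ) : WithBot ℤ) := by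
        rw [(key i j).1]
        calc ((d i : ℤ) : WithBot ℤ) = ((d i + s j : ℤ) : WithBot ℤ) + ((-s j : ℤ) : WithBot ℤ) := by
              rw [← WithBot.coe_add]; congr 1; ring
          _ ≤ zdeg (A.updateRow i (Pi.single j 1)).det + ((-s j : ℤ) : WithBot ℤ) :=
              add_le_add_left hle _
      refine le_trans hstep ?_
      rw [sdeg]
      exact Finset.le_sup (f := fun j => zdeg ((A.adjugate)ᵀ i j) + ((-s j : ℤ) : WithBot ℤ))
        (Finset.mem_univ j)
  · -- sdeg ≤ d i
    rw [sdeg]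
    refine Finset.sup_le fun l _ => ?_
    have h1 := (key i l).2.1
    rw [(key i l).1]
    calc zdeg (A.updateRow i (Pi.single l 1)).det + ((-s l : ℤ) : WithBot ℤ)
        ≤ ((d i + s l : ℤ) : WithBot ℤ) + ((-s l : ℤ) : WithBot ℤ) := add_le_add_left h1 _
      _ = ((d i : ℤ) : WithBot ℤ) := by rw [← WithBot.coe_add]; congr 1; ring

end
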